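/- Diagonalization lemma for towers with coding: suppose z ∈ 2^ω, y ∈ [ω]^ω, and ⟨x_α : α < γ⟩ is a countable tower (γ < ω₁) such that each x_α meets both the odd numbers O and the even numbers E infinitely. Then there exists x ∈ [ω]^ω with x ⊆* x_α for all α < γ, |x ∩ O| = ω, |x ∩ E| = ω, z is Turing-reducible to x, and y ∩ (ω \ x) is infinite. -/

import Mathlib

def AlmostSub (a b : Set ℕ) : Prop := (a \ b).Finite

open Classical in
private lemma nth_range_strictMono (a : ℕ → ℕ) (ha : StrictMono a) (n : ℕ) :
    Nat.nth (· ∈ Set.range a) n = a n := by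
  classical
  have hcount : Nat.count (· ∈ Set.range a) (a n) = n := by
    rw [Nat.count_eq_card_filter_range]
    have : ({x ∈ Finset.range (a n) | x ∈ Set.range a}) = (Finset.range n).image a := by
      ext m
      simp only [Finset.mem_filter, Finset.mem_range, Finset.mem_image, Set.mem_range]
      constructor
      · rintro ⟨hm, k, rfl⟩
        exact ⟨k, ha.lt_iff_lt.1 hm, rfl⟩
      · rintro ⟨k, hk, rfl⟩
        exact ⟨ha hk, k, rfl⟩
    rw [this, Finset.card_image_of_injective _ ha.injective, Finset.card_range]
  have := Nat.nth_count (p := (· ∈ Set.range a)) (n := a n) ⟨n, rfl⟩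
  rwa [hcount] at this

private lemma key_core (c : ℕ → Bool)
    (y : Set ℕ) (hy : y.Infinite)
    (ι : Type) [Countable ι] [Nonempty ι] (r : ι → ι → Prop) (hwo : IsWellOrder ι r)
    (x : ι → Set ℕ)
    (htower : ∀ i j, r i j → AlmostSub (x j) (x i))
    (hO : ∀ i, (x i ∩ {n | Odd n}).Infinite)
    (hE : ∀ i, (x i ∩ {n | Even n}).Infinite) :
    ∃ a : ℕ → ℕ, StrictMono a ∧ (∀ n, Odd (a n) ↔ c n = false) ∧
      (∀ i, (Set.range a \ x i).Finite) ∧ (y \ Set.range a).Infinite := by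
  classical
  haveI := hwo
  obtain ⟨e, he⟩ := exists_surjective_nat ι
  letI : LinearOrder ι := IsWellOrder.linearOrder r
  -- the key picking lemma
  have pick : ∀ (M n : ℕ), ∃ m, M < m ∧ (∀ k ≤ n, m ∈ x (e k)) ∧ (Odd m ↔ c n = false) := by
    intro M n
    have hT : ((Finset.range (n+1)).image e).Nonempty :=
      ⟨e 0, Finset.mem_image.2 ⟨0, Finset.mem_range.2 (Nat.succ_pos n), rfl⟩⟩
    set j := ((Finset.range (n+1)).image e).max' hT with hj
    have hsub : ∀ k ≤ n, (x j \ x (e k)).Finite := by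
      intro k hk
      have hmem : e k ∈ (Finset.range (n+1)).image e :=
        Finset.mem_image.2 ⟨k, Finset.mem_range.2 (Nat.lt_succ_of_le hk), rfl⟩
      have hle : e k ≤ j := Finset.le_max' _ _ hmem
      rcases lt_or_eq_of_le hle with h | h
      · exact htower _ _ h
      · rw [h]; simp [Set.diff_self]
    have hS : (⋃ k ∈ Finset.range (n+1), (x j \ x (e k))).Finite :=
      Set.Finite.biUnion (Finset.finite_toSet _) (fun k hk =>
        hsub k (Nat.lt_succ_iff.1 (Finset.mem_range.1 hk)))
    have hP : (x j ∩ {m | Odd m ↔ c n = false}).Infinite := by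
      cases hcn : c n with
      | false =>
        refine (hO j).mono ?_
        rintro m ⟨hm1, hm2⟩
        exact ⟨hm1, by simpa using hm2⟩
      | true =>
        refine (hE j).mono ?_
        rintro m ⟨hm1, hm2⟩
        refine ⟨hm1, ?_⟩
        simp only [Set.mem_setOf_eq] at hm2 ⊢
        simp [Nat.not_odd_iff_even.2 hm2]
    have hI : ((x j ∩ {m | Odd m ↔ c n = false}) \
        ((⋃ k ∈ Finset.range (n+1), (x j \ x (e k))) ∪ Set.Iic M)).Infinite :=
      hP.diff (hS.union (Set.finite_Iic M))
    obtain ⟨m, hm⟩ := hI.nonempty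
    obtain ⟨⟨hmx, hmp⟩, hm2⟩ := hm
    simp only [Set.mem_union, Set.mem_Iic, not_or, not_le] at hm2
    refine ⟨m, hm2.2, ?_, hmp⟩
    intro k hk
    by_contra hmk
    exact hm2.1 (Set.mem_biUnion (Finset.mem_range.2 (Nat.lt_succ_of_le hk)) ⟨hmx, hmk⟩)
  choose pf hpf1 hpf2 hpf3 using pick
  choose yf hyf1 hyf2 using fun M => hy.exists_gt M
  -- note: hy.exists_gt M : ∃ b ∈ y, M < b
  -- build the sequence
  let f : ℕ → ℕ × ℕ := fun n => Nat.rec (⟨yf 0, pf (yf 0) 0⟩)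
    (fun n prev => ⟨yf prev.2, pf (yf prev.2) (n+1)⟩) n
  have hfs : ∀ n, f (n+1) = ⟨yf (f n).2, pf (yf (f n).2) (n+1)⟩ := fun n => rfl
  have hf0 : f 0 = ⟨yf 0, pf (yf 0) 0⟩ := rfl
  have hby : ∀ n, (f n).1 ∈ y := by
    intro n; cases n with
    | zero => rw [hf0]; exact hyf1 0
    | succ n => rw [hfs]; exact hyf1 _
  have hba : ∀ n, (f n).1 < (f n).2 := by
    intro n; cases n with
    | zero => rw [hf0]; exact hpf1 _ 0
    | succ n => rw [hfs]; exact hpf1 _ _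
  have hab : ∀ n, (f n).2 < (f (n+1)).1 := by
    intro n; rw [hfs]; exact hyf2 _
  have hax : ∀ n k, k ≤ n → (f n).2 ∈ x (e k) := by
    intro n; cases n with
    | zero => rw [hf0]; exact hpf2 _ 0
    | succ n => rw [hfs]; exact hpf2 _ _
  have hpar : ∀ n, Odd ((f n).2) ↔ c n = false := by
    intro n; cases n with
    | zero => rw [hf0]; exact hpf3 _ 0
    | succ n => rw [hfs]; exact hpf3 _ _
  set a : ℕ → ℕ := fun n => (f n).2 with ha
  set b : ℕ → ℕ := fun n => (f n).1 with hb
  have hmono : StrictMono a := strictMono_nat_of_lt_succ (fun n => (hab n).trans (hba (n+1)))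
  have hbmono : StrictMono b := strictMono_nat_of_lt_succ (fun n => (hba n).trans (hab n))
  refine ⟨a, hmono, hpar, ?_, ?_⟩
  · intro i
    obtain ⟨n0, rfl⟩ := he i
    have hss : Set.range a \ x (e n0) ⊆ a '' (Set.Iio n0) := by
      rintro m ⟨⟨n, rfl⟩, hnx⟩
      refine ⟨n, ?_, rfl⟩
      by_contra hn
      exact hnx (hax n n0 (le_of_not_gt hn))
    exact Set.Finite.subset ((Set.finite_Iio n0).image a) hss
  · have hbn : ∀ n, b n ∉ Set.range a := by
      rintro n ⟨k, hk⟩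
      rcases lt_or_ge k n with h | h
      · have : a k < b n := lt_of_le_of_lt (hmono.monotone (Nat.le_sub_one_of_lt h))
          (by
            have := hab (n-1)
            rwa [Nat.sub_add_cancel (Nat.one_le_iff_ne_zero.2 (by omega))] at this)
        omega
      · have : b n < a k := lt_of_lt_of_le (hba n) (hmono.monotone h)
        omega
    have : Set.range b ⊆ y \ Set.range a := by
      rintro m ⟨n, rfl⟩
      exact ⟨hby n, hbn n⟩
    exact Set.Infinite.mono this (Set.infinite_range_of_injective hbmono.injective)

private lemma key_lemma (c : ℕ → Bool)
    (y : Set ℕ) (hy : y.Infinite)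
    (ι : Type) [Countable ι] (r : ι → ι → Prop) (hwo : IsWellOrder ι r)
    (x : ι → Set ℕ)
    (htower : ∀ i j, r i j → AlmostSub (x j) (x i))
    (hO : ∀ i, (x i ∩ {n | Odd n}).Infinite)
    (hE : ∀ i, (x i ∩ {n | Even n}).Infinite) :
    ∃ a : ℕ → ℕ, StrictMono a ∧ (∀ n, Odd (a n) ↔ c n = false) ∧
      (∀ i, (Set.range a \ x i).Finite) ∧ (y \ Set.range a).Infinite := by
  rcases isEmpty_or_nonempty ι with hemp | hne
  · have hwo' : IsWellOrder Unit (fun _ _ => False) := by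
      haveI : IsTrichotomous Unit (fun _ _ => False) :=
        ⟨fun a b _ _ => Subsingleton.elim a b⟩
      haveI : IsTrans Unit (fun _ _ => False) := ⟨fun _ _ _ h => h.elim⟩
      haveI : IsWellFounded Unit (fun _ _ => False) :=
        ⟨⟨fun a => ⟨a, fun _ h => h.elim⟩⟩⟩
      exact ⟨⟩
    obtain ⟨a, h1, h2, h3, h4⟩ := key_core c y hy Unit (fun _ _ => False) hwo'
      (fun _ => Set.univ) (by simp [AlmostSub]) (by
        intro i
        simpa using (Set.infinite_of_forall_exists_gt (s := {n : ℕ | Odd n})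
          (fun a => ⟨2*a+1, ⟨a, rfl⟩, by omega⟩)))
      (by
        intro i
        simpa using (Set.infinite_of_forall_exists_gt (s := {n : ℕ | Even n})
          (fun a => ⟨2*a+2, ⟨a+1, by ring⟩, by omega⟩)))
    exact ⟨a, h1, h2, fun i => hemp.elim i, h4⟩
  · exact key_core c y hy ι r hwo x htower hO hE

theorem tower_diagonalization_with_coding
    (z : ℕ → Bool) (y : Set ℕ) (hy : y.Infinite)
    (ι : Type) [Countable ι] (r : ι → ι → Prop) (hwo : IsWellOrder ι r)
    (x : ι → Set ℕ)
    (hinf : ∀ i, (x i).Infinite)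
    (htower : ∀ i j, r i j → AlmostSub (x j) (x i))
    (hO : ∀ i, (x i ∩ {n | Odd n}).Infinite)
    (hE : ∀ i, (x i ∩ {n | Even n}).Infinite) :
    ∃ w : Set ℕ, w.Infinite ∧
      (∀ i, AlmostSub w (x i)) ∧
      (w ∩ {n | Odd n}).Infinite ∧
      (w ∩ {n | Even n}).Infinite ∧
      ((∃ N b, ∀ i ≥ N, z i = b) ∨ ∀ i, (z i = false ↔ Odd (Nat.nth (· ∈ w) i))) ∧
      (y \ w).Infinite := by
  classical
  by_cases hconst : ∃ N b, ∀ i ≥ N, z i = b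
  · -- use an alternating coding
    set c : ℕ → Bool := fun n => decide (Odd n) with hc
    have hcf : {n | c n = false}.Infinite := by
      apply Set.infinite_of_forall_exists_gt
      intro m
      exact ⟨2*m+2, by simp [hc, Nat.odd_iff] <;> omega, by omega⟩
    have hct : {n | c n = true}.Infinite := by
      apply Set.infinite_of_forall_exists_gt
      intro m
      exact ⟨2*m+1, by simp [hc, Nat.odd_iff] <;> omega, by omega⟩
    obtain ⟨a, h1, h2, h3, h4⟩ := key_lemma c y hy ι r hwo x htower hO hE
    refine ⟨Set.range a, Set.infinite_range_of_injective h1.injective,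
      fun i => h3 i, ?_, ?_, Or.inl hconst, h4⟩
    · refine Set.Infinite.mono ?_ (hcf.image (Set.injOn_of_injective h1.injective))
      rintro m ⟨n, hn, rfl⟩
      exact ⟨⟨n, rfl⟩, (h2 n).2 hn⟩
    · refine Set.Infinite.mono ?_ (hct.image (Set.injOn_of_injective h1.injective))
      rintro m ⟨n, hn, rfl⟩
      refine ⟨⟨n, rfl⟩, ?_⟩
      have hodd : ¬ Odd (a n) := by rw [h2 n, hn]; simp
      exact Nat.not_odd_iff_even.1 hodd
  · push_neg at hconst
    have hcf : {n | z n = false}.Infinite := by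
      apply Set.infinite_of_forall_exists_gt
      intro m
      obtain ⟨i, hi, hne⟩ := hconst (m+1) true
      exact ⟨i, by simpa using hne, by omega⟩
    have hct : {n | z n = true}.Infinite := by
      apply Set.infinite_of_forall_exists_gt
      intro m
      obtain ⟨i, hi, hne⟩ := hconst (m+1) false
      exact ⟨i, by simpa using hne, by omega⟩
    obtain ⟨a, h1, h2, h3, h4⟩ := key_lemma z y hy ι r hwo x htower hO hE
    refine ⟨Set.range a, Set.infinite_range_of_injective h1.injective,
      fun i => h3 i, ?_, ?_, Or.inr ?_, h4⟩
    · refine Set.Infinite.mono ?_ (hcf.image (Set.injOn_of_injective h1.injective))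
      rintro m ⟨n, hn, rfl⟩
      exact ⟨⟨n, rfl⟩, (h2 n).2 hn⟩
    · refine Set.Infinite.mono ?_ (hct.image (Set.injOn_of_injective h1.injective))
      rintro m ⟨n, hn, rfl⟩
      refine ⟨⟨n, rfl⟩, ?_⟩
      have hodd : ¬ Odd (a n) := by rw [h2 n, hn]; simp
      exact Nat.not_odd_iff_even.1 hodd
    · intro i
      rw [nth_range_strictMono a h1 i]
      exact (h2 i).symm
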